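/- Let x ∈ ℂ^{r×s} and y ∈ ℂ^{s×r} such that 1_r − xy is invertible. Then the directional derivative of the map (x,y) ↦ det(1_r − xy) at (x,y) along (u,v) ∈ ℂ^{r×s} × ℂ^{s×r} equals −det(1_r − xy)·(tr((1_r − xy)⁻¹ u y) + tr(x (1_s − yx)⁻¹ v)). -/

import Mathlib

open Matrix Finset

theorem sum_det_updateColumn_eq_trace {n : ℕ} (A B : Matrix (Fin n) (Fin n) ℂ) :
    ∑ i, (A.updateCol i fun k => B k i).det = Matrix.trace (A.adjugate * B) := by
  simp only [← Matrix.cramer_apply, Matrix.cramer_eq_adjugate_mulVec]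
  simp [Matrix.trace, Matrix.mul_apply, Matrix.mulVec, dotProduct, Matrix.diag]

theorem hasDerivAt_det_curve {n : ℕ} {M : ℂ → Matrix (Fin n) (Fin n) ℂ}
    {B : Matrix (Fin n) (Fin n) ℂ}
    (hM : ∀ i j, HasDerivAt (fun t => M t i j) (B i j) 0) :
    HasDerivAt (fun t => (M t).det) (Matrix.trace ((M 0).adjugate * B)) 0 := by
  have h0 : HasDerivAt (fun t => ∑ σ : Equiv.Perm (Fin n),
      ((Equiv.Perm.sign σ : ℤ) : ℂ) * ∏ i, M t (σ i) i)
      (∑ σ : Equiv.Perm (Fin n), ((Equiv.Perm.sign σ : ℤ) : ℂ) *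
        (∑ i, (∏ j ∈ univ.erase i, M 0 (σ j) j) • B (σ i) i)) 0 := by
    refine HasDerivAt.fun_sum fun σ _ => ?_
    exact (HasDerivAt.fun_finsetProd fun i _ => hM (σ i) i).const_mul _
  have heq : (fun t => (M t).det) = fun t => ∑ σ : Equiv.Perm (Fin n),
      ((Equiv.Perm.sign σ : ℤ) : ℂ) * ∏ i, M t (σ i) i := funext fun t => Matrix.det_apply' _
  rw [heq]
  convert h0 using 1
  rw [← sum_det_updateColumn_eq_trace]
  have hdet : ∀ i : Fin n, ((M 0).updateCol i fun k => B k i).det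
      = ∑ σ : Equiv.Perm (Fin n), ((Equiv.Perm.sign σ : ℤ) : ℂ) *
          (B (σ i) i * ∏ j ∈ univ.erase i, M 0 (σ j) j) := by
    intro i
    rw [Matrix.det_apply']
    refine Finset.sum_congr rfl fun σ _ => ?_
    congr 1
    rw [← Finset.mul_prod_erase Finset.univ _ (Finset.mem_univ i),
      Matrix.updateCol_self]
    congr 1
    exact Finset.prod_congr rfl fun j hj =>
      Matrix.updateCol_ne (Finset.ne_of_mem_erase hj)
  simp only [hdet, Finset.mul_sum, smul_eq_mul]
  rw [Finset.sum_comm]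
  exact Finset.sum_congr rfl fun i _ => Finset.sum_congr rfl fun σ _ => by ring

theorem directional_derivative_jordan_pair_det {r s : ℕ}
    (x : Matrix (Fin r) (Fin s) ℂ) (y : Matrix (Fin s) (Fin r) ℂ)
    (h : IsUnit ((1 : Matrix (Fin r) (Fin r) ℂ) - x * y))
    (u : Matrix (Fin r) (Fin s) ℂ) (v : Matrix (Fin s) (Fin r) ℂ) :
    deriv (fun t : ℂ =>
        ((1 : Matrix (Fin r) (Fin r) ℂ) - (x + t • u) * (y + t • v)).det) 0
      = -((1 : Matrix (Fin r) (Fin r) ℂ) - x * y).det *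
          (Matrix.trace (((1 : Matrix (Fin r) (Fin r) ℂ) - x * y)⁻¹ * u * y) +
            Matrix.trace (x * ((1 : Matrix (Fin s) (Fin s) ℂ) - y * x)⁻¹ * v)) := by
  set A : Matrix (Fin r) (Fin r) ℂ := 1 - x * y with hA
  have hd : IsUnit A.det := (Matrix.isUnit_iff_isUnit_det _).mp h
  have hd2 : IsUnit ((1 : Matrix (Fin s) (Fin s) ℂ) - y * x).det := by
    rw [Matrix.det_one_sub_mul_comm]; exact hd
  -- entrywise derivatives
  have hM : ∀ i j, HasDerivAt
      (fun t : ℂ => ((1 : Matrix (Fin r) (Fin r) ℂ) - (x + t • u) * (y + t • v)) i j)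
      ((-(u * y + x * v)) i j) 0 := by
    intro i j
    have hent : ∀ k : Fin s, HasDerivAt
        (fun t : ℂ => (x i k + t * u i k) * (y k j + t * v k j))
        (u i k * y k j + x i k * v k j) 0 := by
      intro k
      have h1 : HasDerivAt (fun t : ℂ => x i k + t * u i k) (u i k) 0 := by
        simpa using ((hasDerivAt_id (0:ℂ)).mul_const (u i k)).const_add (x i k)
      have h2 : HasDerivAt (fun t : ℂ => y k j + t * v k j) (v k j) 0 := by
        simpa using ((hasDerivAt_id (0:ℂ)).mul_const (v k j)).const_add (y k j)
      simpa using h1.fun_mul h2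
    have hsum : HasDerivAt
        (fun t : ℂ => (1 : Matrix (Fin r) (Fin r) ℂ) i j
          - ∑ k, (x i k + t * u i k) * (y k j + t * v k j))
        (-(∑ k, (u i k * y k j + x i k * v k j))) 0 :=
      (HasDerivAt.fun_sum fun k _ => hent k).const_sub _
    have hfun : (fun t : ℂ =>
        ((1 : Matrix (Fin r) (Fin r) ℂ) - (x + t • u) * (y + t • v)) i j)
        = fun t : ℂ => (1 : Matrix (Fin r) (Fin r) ℂ) i j
          - ∑ k, (x i k + t * u i k) * (y k j + t * v k j) := by
      funext t
      simp [Matrix.sub_apply, Matrix.mul_apply, Matrix.add_apply, Matrix.smul_apply,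
        smul_eq_mul]
    have hval : (-(u * y + x * v)) i j = -(∑ k, (u i k * y k j + x i k * v k j)) := by
      simp [Matrix.mul_apply, Finset.sum_add_distrib]
    rw [hfun, hval]
    exact hsum
  have hder := (hasDerivAt_det_curve hM).deriv
  have hM0 : ((1 : Matrix (Fin r) (Fin r) ℂ) - (x + (0:ℂ) • u) * (y + (0:ℂ) • v)) = A := by
    simp [hA]
  rw [hM0] at hder
  rw [hder]
  -- now the algebraic identity
  have hadj : A.adjugate = A.det • A⁻¹ := by
    rw [Matrix.inv_def, smul_smul, mul_comm, Ring.inverse_mul_cancel _ hd, one_smul]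
  have hx : A⁻¹ * x = x * ((1 : Matrix (Fin s) (Fin s) ℂ) - y * x)⁻¹ := by
    have hc : A * x = x * ((1 : Matrix (Fin s) (Fin s) ℂ) - y * x) := by
      rw [hA, Matrix.sub_mul, Matrix.mul_sub, Matrix.one_mul, Matrix.mul_one, Matrix.mul_assoc]
    have hxx : x = A * (x * ((1 : Matrix (Fin s) (Fin s) ℂ) - y * x)⁻¹) := by
      rw [← Matrix.mul_assoc, hc, Matrix.mul_assoc, Matrix.mul_nonsing_inv _ hd2, Matrix.mul_one]
    calc A⁻¹ * x = A⁻¹ * (A * (x * ((1 : Matrix (Fin s) (Fin s) ℂ) - y * x)⁻¹)) := by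
          rw [← hxx]
      _ = x * ((1 : Matrix (Fin s) (Fin s) ℂ) - y * x)⁻¹ := by
          rw [← Matrix.mul_assoc, Matrix.nonsing_inv_mul _ hd, Matrix.one_mul]
  rw [hadj, Matrix.smul_mul, Matrix.trace_smul, smul_eq_mul]
  rw [show A⁻¹ * -(u * y + x * v) = -(A⁻¹ * u * y + (A⁻¹ * x) * v) by
    rw [Matrix.mul_neg, Matrix.mul_add, Matrix.mul_assoc, Matrix.mul_assoc]]
  rw [hx]
  rw [Matrix.trace_neg, Matrix.trace_add]
  ring
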